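/- For the hyperbolic cross index set $\Lambda^{HC}_n = \{\mathbf{n} \in \mathbb{N}_0^d : \prod_{k=1}^d (n_k + 1) \leq n+1\}$, the cardinality satisfies $|\Lambda^{HC}_n| \leq \lfloor (n+1)(1 + \log(n+1))^{d-1} \rfloor$. -/

import Mathlib

open Finset

/-- The hyperbolic cross finset. -/
def HCset (d N : ℕ) : Finset (Fin d → ℕ) :=
  (Fintype.piFinset fun _ => Finset.range N).filter (fun m => ∏ k, (m k + 1) ≤ N)

lemma mem_HCset {d N : ℕ} (m : Fin d → ℕ) :
    m ∈ HCset d N ↔ ∏ k, (m k + 1) ≤ N := by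
  simp only [HCset, Finset.mem_filter, Fintype.mem_piFinset, Finset.mem_range]
  constructor
  · exact fun h => h.2
  · intro h
    refine ⟨fun k => ?_, h⟩
    have h1 : m k + 1 ≤ ∏ k, (m k + 1) :=
      Finset.single_le_prod' (fun i _ => Nat.le_add_left 1 (m i)) (Finset.mem_univ k)
    omega

lemma card_HCset_succ (d N : ℕ) :
    (HCset (d + 1) N).card ≤ ∑ j ∈ Finset.range N, (HCset d (N / (j + 1))).card := by
  rw [← Finset.card_sigma]
  apply Finset.card_le_card_of_injOn (fun m => ⟨m 0, Fin.tail m⟩)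
  · intro m hm
    rw [Finset.mem_coe, mem_HCset] at hm
    have hprod : ∏ k, (m k + 1) = (m 0 + 1) * ∏ k : Fin d, (Fin.tail m k + 1) := by
      rw [Fin.prod_univ_succ]; rfl
    have h0 : m 0 + 1 ≤ ∏ k, (m k + 1) :=
      Finset.single_le_prod' (fun i _ => Nat.le_add_left 1 (m i)) (Finset.mem_univ 0)
    have htail : ∏ k : Fin d, (Fin.tail m k + 1) ≤ N / (m 0 + 1) := by
      rw [Nat.le_div_iff_mul_le (Nat.succ_pos _)]
      rw [hprod, mul_comm] at hm; exact hm
    rw [Finset.mem_coe, Finset.mem_sigma]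
    refine ⟨?_, ?_⟩
    · show m 0 ∈ Finset.range N
      exact Finset.mem_range.2 (by omega)
    · show Fin.tail m ∈ HCset d (N / (m 0 + 1))
      exact (mem_HCset _).2 htail
  · intro m _ m' _ h
    have h0 : m 0 = m' 0 := congrArg (fun s => s.1) h
    have h1 : Fin.tail m = Fin.tail m' := congrArg (fun s => s.2) h
    funext k
    rcases Fin.eq_zero_or_eq_succ k with rfl | ⟨i, rfl⟩
    · exact h0
    · exact congrFun h1 i

lemma harmonic_sum_le (N : ℕ) :
    ∑ j ∈ Finset.range N, (1 : ℝ) / (j + 1) ≤ 1 + Real.log N := by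
  have h := harmonic_le_one_add_log N
  have heq : ((harmonic N : ℚ) : ℝ) = ∑ j ∈ Finset.range N, (1 : ℝ) / (j + 1) := by
    simp only [harmonic, Rat.cast_sum, Rat.cast_inv, one_div]
    push_cast
    rfl
  linarith [heq ▸ h]

lemma hc_bound : ∀ d, 1 ≤ d → ∀ N : ℕ, 1 ≤ N →
    ((HCset d N).card : ℝ) ≤ N * (1 + Real.log N) ^ (d - 1) := by
  intro d
  induction d with
  | zero => omega
  | succ d ih =>
    intro _ N hN
    rcases Nat.eq_zero_or_pos d with rfl | hd
    · -- base case d = 1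
      simp only [Nat.sub_self, pow_zero, mul_one]
      have hcard : (HCset 1 N).card ≤ (Finset.range N).card := by
        apply Finset.card_le_card_of_injOn (fun m => m 0)
        · intro m hm
          rw [Finset.mem_coe, mem_HCset] at hm
          simp only [Fin.prod_univ_one] at hm
          exact Finset.mem_coe.2 (Finset.mem_range.2 (show m 0 < N by omega))
        · intro m _ m' _ h
          funext k
          have : k = 0 := Subsingleton.elim _ _
          rw [this]; exact h
      rw [Finset.card_range] at hcard
      exact_mod_cast hcard
    · -- inductive step
      have hlogN : 0 ≤ Real.log N := Real.log_natCast_nonneg N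
      have hpow : ∀ e : ℕ, (0:ℝ) ≤ (1 + Real.log N) ^ e := fun e => pow_nonneg (by linarith) e
      calc ((HCset (d + 1) N).card : ℝ)
          ≤ ∑ j ∈ Finset.range N, ((HCset d (N / (j + 1))).card : ℝ) := by
            exact_mod_cast card_HCset_succ d N
        _ ≤ ∑ j ∈ Finset.range N, (N : ℝ) / (j + 1) * (1 + Real.log N) ^ (d - 1) := by
            apply Finset.sum_le_sum
            intro j _
            rcases Nat.eq_zero_or_pos (N / (j + 1)) with hM | hM
            · have : HCset d (N / (j+1)) = ∅ := by
                rw [hM]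
                ext m
                simp only [mem_HCset, Finset.notMem_empty, iff_false]
                have : 0 < ∏ k, (m k + 1) := Finset.prod_pos (fun i _ => Nat.succ_pos _)
                omega
              rw [this]
              simp only [Finset.card_empty, Nat.cast_zero]
              positivity
            · have h1 := ih hd (N / (j + 1)) hM
              have h2 : ((N / (j + 1) : ℕ) : ℝ) ≤ (N : ℝ) / (j + 1) := by
                have := Nat.cast_div_le (α := ℝ) (m := N) (n := j + 1)
                push_cast at this ⊢
                exact this
              have h3 : Real.log (N / (j + 1) : ℕ) ≤ Real.log N :=
                Real.log_le_log (by exact_mod_cast hM) (by exact_mod_cast Nat.div_le_self N (j+1))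
              have hlogM : 0 ≤ Real.log ((N / (j + 1) : ℕ) : ℝ) :=
                Real.log_nonneg (by exact_mod_cast hM)
              have h4 : (1 + Real.log ((N / (j + 1) : ℕ) : ℝ)) ^ (d - 1)
                  ≤ (1 + Real.log N) ^ (d - 1) :=
                pow_le_pow_left₀ (by linarith) (by linarith) _
              calc ((HCset d (N / (j + 1))).card : ℝ)
                  ≤ ((N / (j + 1) : ℕ) : ℝ) * (1 + Real.log ((N / (j + 1) : ℕ) : ℝ)) ^ (d - 1) := h1
                _ ≤ (N : ℝ) / (j + 1) * (1 + Real.log N) ^ (d - 1) := by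
                    apply mul_le_mul h2 h4 (by positivity) (by positivity)
        _ = (N : ℝ) * (1 + Real.log N) ^ (d - 1) * ∑ j ∈ Finset.range N, (1:ℝ) / (j + 1) := by
            rw [Finset.mul_sum]
            apply Finset.sum_congr rfl
            intro j _
            ring
        _ ≤ (N : ℝ) * (1 + Real.log N) ^ (d - 1) * (1 + Real.log N) := by
            apply mul_le_mul_of_nonneg_left (harmonic_sum_le N)
            positivity
        _ = (N : ℝ) * (1 + Real.log N) ^ (d + 1 - 1) := by
            rw [mul_assoc, ← pow_succ]
            congr 2
            omega

/-- **Cardinality bound for the hyperbolic cross index set.**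
For the hyperbolic cross index set `Λ^HC_n = {n ∈ ℕ₀^d : ∏_k (n_k + 1) ≤ n + 1}`
(here given as any finset `S` whose members are exactly those multi-indices), the
cardinality satisfies `|Λ^HC_n| ≤ ⌊(n+1)(1 + log(n+1))^{d-1}⌋`. -/
theorem hyperbolic_cross_card_le
    {d : ℕ} (hd : 1 ≤ d) (n : ℕ) (S : Finset (Fin d → ℕ))
    (hS : ∀ m : Fin d → ℕ, m ∈ S ↔ ∏ k, (m k + 1) ≤ n + 1) :
    (S.card : ℤ) ≤ ⌊((n : ℝ) + 1) * (1 + Real.log ((n : ℝ) + 1)) ^ (d - 1)⌋ := by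
  have hSeq : S = HCset d (n + 1) := by
    ext m
    rw [hS, mem_HCset]
  rw [Int.le_floor, hSeq]
  have := hc_bound d hd (n + 1) (Nat.le_add_left 1 n)
  push_cast at this ⊢
  convert this using 3
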